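/- Let c be a nonzero complex number and let A be a 2×2 complex Hermitian matrix such that for all u, v ∈ ℂ²: re (u† A u) + re (v† A v) + 2 * re (c * (u 0 * v 1 − u 1 * v 0)) ≥ 0, where u† A u denotes the sesquilinear value ∑ᵢⱼ conj (u i) * A i j * u j. Then A is positive definite (re (u† A u) > 0 for all u ≠ 0) and the determinant of A (which is real since A is Hermitian) satisfies re (det A) ≥ ‖c‖². -/

import Mathlib

open Complex

/-- Algebraic core of the quasi-local mass-charge inequality ϖ² ≥ Q² + P²
(Theorem 3.3): positivity of the quadratic form with off-diagonal charge term
forces A to be positive definite with re(det A) ≥ ‖c‖². -/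
theorem massCharge_inequality_core
    (c : ℂ) (hc : c ≠ 0)
    (A : Matrix (Fin 2) (Fin 2) ℂ)
    (hA : ∀ i j : Fin 2, A i j = (starRingEnd ℂ) (A j i))
    (hpos : ∀ u v : Fin 2 → ℂ,
        0 ≤ (∑ i : Fin 2, ∑ j : Fin 2, (starRingEnd ℂ) (u i) * A i j * u j).re
          + (∑ i : Fin 2, ∑ j : Fin 2, (starRingEnd ℂ) (v i) * A i j * v j).re
          + 2 * (c * (u 0 * v 1 - u 1 * v 0)).re) :
    (∀ u : Fin 2 → ℂ, u ≠ 0 →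
        0 < (∑ i : Fin 2, ∑ j : Fin 2, (starRingEnd ℂ) (u i) * A i j * u j).re)
    ∧ ‖c‖ ^ 2 ≤ (A.det).re := by
  set f : (Fin 2 → ℂ) → ℝ :=
    fun u => (∑ i : Fin 2, ∑ j : Fin 2, (starRingEnd ℂ) (u i) * A i j * u j).re with hf
  have h0 : ∀ u, 0 ≤ f u := by
    intro u
    have := hpos u 0
    simpa [hf] using this
  have key : ∀ u v : Fin 2 → ℂ,
      ((c * (u 0 * v 1 - u 1 * v 0)).re) ^ 2 ≤ f u * f v := by
    intro u v
    have hd := discrim_le_zero (a := f u) (b := 2 * (c * (u 0 * v 1 - u 1 * v 0)).re)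
      (c := f v) ?_
    · simp only [discrim] at hd
      nlinarith [hd]
    · intro x
      have h := hpos (fun i => (x : ℂ) * u i) v
      have e1 : (∑ i : Fin 2, ∑ j : Fin 2,
            (starRingEnd ℂ) ((x:ℂ) * u i) * A i j * ((x:ℂ) * u j))
          = ((x:ℂ) * (x:ℂ)) * (∑ i : Fin 2, ∑ j : Fin 2,
            (starRingEnd ℂ) (u i) * A i j * u j) := by
        simp only [Fin.sum_univ_two, map_mul, conj_ofReal]
        ring
      have e2 : (c * (((x:ℂ) * u 0) * v 1 - ((x:ℂ) * u 1) * v 0))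
          = (x:ℂ) * (c * (u 0 * v 1 - u 1 * v 0)) := by ring
      rw [e1, e2] at h
      have e3 : (((x:ℂ) * (x:ℂ)) * (∑ i : Fin 2, ∑ j : Fin 2,
          (starRingEnd ℂ) (u i) * A i j * u j)).re = (x * x) * f u := by
        rw [show ((x:ℂ) * (x:ℂ)) = ((x*x : ℝ) : ℂ) by push_cast; ring, re_ofReal_mul]
      have e4 : ((x:ℂ) * (c * (u 0 * v 1 - u 1 * v 0))).re
          = x * (c * (u 0 * v 1 - u 1 * v 0)).re := re_ofReal_mul _ _
      rw [e3, e4] at h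
      rw [hf]
      linarith
  have hcpos : 0 < normSq c := normSq_pos.mpr hc
  have posdef : ∀ u : Fin 2 → ℂ, u ≠ 0 → 0 < f u := by
    intro u hu
    rcases (h0 u).lt_or_eq with h | h
    · exact h
    · exfalso
      have hne : u 0 ≠ 0 ∨ u 1 ≠ 0 := by
        by_contra hcon
        push_neg at hcon
        exact hu (funext fun i => by fin_cases i <;> simp [hcon.1, hcon.2])
      rcases hne with h1 | h1
      · have k := key u ![0, (starRingEnd ℂ) c / u 0]
        have e : c * (u 0 * ((![0, (starRingEnd ℂ) c / u 0] : Fin 2 → ℂ) 1)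
            - u 1 * ((![0, (starRingEnd ℂ) c / u 0] : Fin 2 → ℂ) 0)) = ↑(normSq c) := by
          simp only [Matrix.cons_val_one, Matrix.head_cons, Matrix.cons_val_zero]
          field_simp
          simp only [mul_zero, sub_zero, zero_sub, neg_neg]
          exact mul_conj c
        rw [e] at k
        simp only [ofReal_re] at k
        nlinarith [h0 (![0, (starRingEnd ℂ) c / u 0] : Fin 2 → ℂ), k, hcpos]
      · have k := key u ![-((starRingEnd ℂ) c / u 1), 0]
        have e : c * (u 0 * ((![-((starRingEnd ℂ) c / u 1), 0] : Fin 2 → ℂ) 1)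
            - u 1 * ((![-((starRingEnd ℂ) c / u 1), 0] : Fin 2 → ℂ) 0)) = ↑(normSq c) := by
          simp only [Matrix.cons_val_one, Matrix.head_cons, Matrix.cons_val_zero]
          field_simp
          simp only [mul_zero, sub_zero, zero_sub, neg_neg]
          exact mul_conj c
        rw [e] at k
        simp only [ofReal_re] at k
        nlinarith [h0 (![-((starRingEnd ℂ) c / u 1), 0] : Fin 2 → ℂ), k, hcpos]
  refine ⟨posdef, ?_⟩
  -- real components
  have im00 : (A 0 0).im = 0 := by
    have := congrArg Complex.im (hA 0 0)
    simp only [conj_im] at this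
    linarith
  have im11 : (A 1 1).im = 0 := by
    have := congrArg Complex.im (hA 1 1)
    simp only [conj_im] at this
    linarith
  have h10 : A 1 0 = (starRingEnd ℂ) (A 0 1) := hA 1 0
  have ha : 0 < f ![1, 0] := by
    apply posdef
    intro hcon
    have := congrFun hcon 0
    simp at this
  have hfe0 : f ![1, 0] = (A 0 0).re := by
    simp [hf, Fin.sum_univ_two]
  have k := key ![1, 0] ![-(A 0 1) * (starRingEnd ℂ) c, (A 0 0) * (starRingEnd ℂ) c]
  rw [Matrix.det_fin_two]
  rw [hfe0] at ha
  simp only [hf, Fin.sum_univ_two, Matrix.cons_val_zero, Matrix.cons_val_one,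
    Matrix.head_cons, h10] at k ⊢
  rw [Complex.sq_norm]
  simp only [map_mul, map_neg, map_one, map_zero, RingHom.id_apply, starRingEnd_self_apply,
    mul_re, mul_im, sub_re, sub_im, add_re, add_im, neg_re, neg_im, conj_re, conj_im,
    one_re, one_im, zero_re, zero_im, normSq_apply] at k ⊢
  set ar := (A 0 0).re
  set dr := (A 1 1).re
  set br := (A 0 1).re
  set bi := (A 0 1).im
  set cr := c.re
  set ci := c.im
  rw [im00, im11] at k ⊢
  have hN : 0 < cr^2 + ci^2 := by
    have := hcpos
    simp [normSq_apply] at this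
    nlinarith [this]
  nlinarith [k, mul_pos (mul_pos ha ha) hN, sq_nonneg (cr^2+ci^2), mul_pos ha hN]
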